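/- Let q ≥ 2 be an integer, and let f, g ∈ ℝ[x,y] be nonzero polynomials that are weighted homogeneous with respect to the weights (q, 1) (every monomial x^i y^j of f satisfies q·i + j = d_f for some fixed d_f, and similarly for g). Assume that neither f nor g can be written in the form A·(x + b·y^q)^k · y^l with A, b ∈ ℝ and k, l ∈ ℕ. If there exists a C¹ diffeomorphism germ σ : (ℝ²,0) → (ℝ²,0) with f = g ∘ σ on a neighbourhood of the origin, then there exist real numbers c₁ ≠ 0, c₂ ≠ 0 and b ∈ ℝ such that f(x, y) = g(c₁·x − b·y^q, c₂·y) for all (x, y) ∈ ℝ². -/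

import Mathlib

open Filter Topology

noncomputable section

/-- A C¹ diffeomorphism germ at the origin. -/
def IsC1DiffeoGerm {E : Type*} [NormedAddCommGroup E] [NormedSpace ℝ E] (σ : E → E) : Prop :=
  σ 0 = 0 ∧ ∃ (U V : Set E) (τ : E → E), IsOpen U ∧ IsOpen V ∧ (0 : E) ∈ U ∧ (0 : E) ∈ V ∧
    Set.MapsTo σ U V ∧ Set.MapsTo τ V U ∧ (∀ x ∈ U, τ (σ x) = x) ∧ (∀ y ∈ V, σ (τ y) = y) ∧
    ContDiffOn ℝ 1 σ U ∧ ContDiffOn ℝ 1 τ V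

open Asymptotics Polynomial Bornology

namespace Stmt13

variable {q : ℕ}

abbrev W (q : ℕ) : Fin 2 → ℕ := fun i : Fin 2 => if i = 0 then q else 1

lemma weight_apply_two (q : ℕ) (v : Fin 2 →₀ ℕ) :
    (Finsupp.weight (W q)) v = q * v 0 + v 1 := by
  rw [Finsupp.weight_apply, Finsupp.sum_fintype]
  · simp [Fin.sum_univ_two, W, mul_comm]
  · intro i; simp

/-- the univariate polynomial `P(s) = p(s, 1)`. -/
def Psub (p : MvPolynomial (Fin 2) ℝ) : Polynomial ℝ :=
  ∑ v ∈ p.support, Polynomial.C (MvPolynomial.coeff v p) * Polynomial.X ^ (v 0)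

lemma Psub_coeff (p : MvPolynomial (Fin 2) ℝ) (j : ℕ) :
    (Psub p).coeff j = ∑ v ∈ p.support.filter (fun v => v 0 = j), MvPolynomial.coeff v p := by
  rw [Psub, Polynomial.finset_sum_coeff, Finset.sum_filter]
  apply Finset.sum_congr rfl
  intro v _
  rw [Polynomial.coeff_C_mul, Polynomial.coeff_X_pow]
  by_cases h : v 0 = j
  · simp [h]
  · simp [h, Ne.symm h]

variable {p : MvPolynomial (Fin 2) ℝ} {e : ℕ}

lemma A1 (hp : p.IsWeightedHomogeneous (W q) e) (s t : ℝ) :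
    MvPolynomial.eval ![s * t ^ q, t] p = t ^ e * (Psub p).eval s := by
  rw [MvPolynomial.eval_eq', Psub, Polynomial.eval_finset_sum, Finset.mul_sum]
  apply Finset.sum_congr rfl
  intro v hv
  have hw : q * v 0 + v 1 = e := by
    have := hp (MvPolynomial.mem_support_iff.mp hv)
    rwa [weight_apply_two] at this
  simp only [Fin.prod_univ_two, Matrix.cons_val_zero, Matrix.cons_val_one, Matrix.head_cons,
    Polynomial.eval_mul, Polynomial.eval_C, Polynomial.eval_pow, Polynomial.eval_X]
  rw [mul_pow, ← pow_mul, ← hw, pow_add, mul_comm q (v 0)]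
  ring

lemma A2 (hp : p.IsWeightedHomogeneous (W q) e) {i : ℕ} (hi : (Psub p).coeff i ≠ 0) :
    q * i ≤ e ∧ (∀ v ∈ p.support, v 0 = i → q * v 0 + v 1 = e) := by
  constructor
  · rw [Psub_coeff] at hi
    obtain ⟨v, hv, -⟩ := Finset.exists_ne_zero_of_sum_ne_zero hi
    rw [Finset.mem_filter] at hv
    have h := hp (MvPolynomial.mem_support_iff.mp hv.1)
    rw [weight_apply_two, hv.2] at h
    omega
  · intro v hv _
    have := hp (MvPolynomial.mem_support_iff.mp hv)
    rwa [weight_apply_two] at this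

lemma A3 (hp : p.IsWeightedHomogeneous (W q) e) (x y : ℝ) :
    MvPolynomial.eval ![x, y] p
      = ∑ j ∈ Finset.range ((Psub p).natDegree + 1),
          (Psub p).coeff j * x ^ j * y ^ (e - q * j) := by
  have key : ∀ j ∈ Finset.range ((Psub p).natDegree + 1),
      (Psub p).coeff j * x ^ j * y ^ (e - q * j)
        = ∑ v ∈ p.support.filter (fun v => v 0 = j),
            MvPolynomial.coeff v p * (x ^ (v 0) * y ^ (v 1)) := by
    intro j _
    rw [Psub_coeff, Finset.sum_mul, Finset.sum_mul]
    apply Finset.sum_congr rfl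
    intro v hv
    rw [Finset.mem_filter] at hv
    have hw := hp (MvPolynomial.mem_support_iff.mp hv.1)
    rw [weight_apply_two] at hw
    have h0 : v 0 = j := hv.2
    rw [h0] at hw
    have h1 : v 1 = e - q * j := by omega
    rw [h0, h1]; ring
  rw [Finset.sum_congr rfl key, MvPolynomial.eval_eq']
  rw [← Finset.sum_fiberwise_of_maps_to (g := fun v : Fin 2 →₀ ℕ => v 0)
    (t := Finset.range ((Psub p).natDegree + 1))]
  · apply Finset.sum_congr rfl
    intro v _
    simp [Fin.prod_univ_two]
  · intro v hv
    rw [Finset.mem_range, Nat.lt_succ_iff]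
    apply Polynomial.le_natDegree_of_ne_zero
    rw [Psub_coeff]
    have : p.support.filter (fun v' => v' 0 = v 0) = {v} := by
      apply Finset.eq_singleton_iff_unique_mem.mpr
      refine ⟨Finset.mem_filter.mpr ⟨hv, rfl⟩, ?_⟩
      intro v' hv'
      rw [Finset.mem_filter] at hv'
      have hw' := hp (MvPolynomial.mem_support_iff.mp hv'.1)
      have hw := hp (MvPolynomial.mem_support_iff.mp hv)
      rw [weight_apply_two] at hw hw'
      have h2 : v' 0 = v 0 := hv'.2
      rw [h2] at hw'
      have h3 : v' 1 = v 1 := by omega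
      ext i
      fin_cases i
      · exact h2
      · exact h3
    rw [this, Finset.sum_singleton]
    exact MvPolynomial.mem_support_iff.mp hv
  done

lemma fin2_eta (φ : Fin 2 → ℝ) : ![φ 0, φ 1] = φ := by
  funext i; fin_cases i <;> rfl

/-- p is determined by its values off y = 0. -/
lemma eq_of_eval_eq_off_axis {p₁ p₂ : MvPolynomial (Fin 2) ℝ}
    (h : ∀ x y : ℝ, y ≠ 0 → MvPolynomial.eval ![x, y] p₁ = MvPolynomial.eval ![x, y] p₂) :
    p₁ = p₂ := by
  have hX : MvPolynomial.X 1 * p₁ = MvPolynomial.X 1 * p₂ := by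
    apply MvPolynomial.funext
    intro φ
    have hφ : ![φ 0, φ 1] = φ := fin2_eta φ
    by_cases hy : φ 1 = 0
    · simp [MvPolynomial.eval_mul, hy]
    · have := h (φ 0) (φ 1) hy
      rw [hφ] at this
      simp [MvPolynomial.eval_mul, this]
  exact mul_left_cancel₀ (MvPolynomial.X_ne_zero 1) hX

lemma A5 (hp : p.IsWeightedHomogeneous (W q) e) (hp0 : p ≠ 0) : Psub p ≠ 0 := by
  intro h
  apply hp0
  apply eq_of_eval_eq_off_axis (p₂ := 0)
  intro x y hy
  have := A1 hp (x / y ^ q) y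
  rw [div_mul_cancel₀] at this
  · rw [this, h]; simp
  · exact pow_ne_zero _ hy

/-- Monomial-like conclusion: if `Psub p` is `a (X + r)^k`, then p is monomial-like. -/
lemma A6 (hp : p.IsWeightedHomogeneous (W q) e) (a r : ℝ) (k : ℕ) (hk : q * k ≤ e)
    (hev : ∀ c : ℝ, (Psub p).eval c = a * (c + r) ^ k) :
    ∀ x y : ℝ, MvPolynomial.eval ![x, y] p = a * (x + r * y ^ q) ^ k * y ^ (e - q * k) := by
  classical
  set p' : MvPolynomial (Fin 2) ℝ :=
    MvPolynomial.C a * (MvPolynomial.X 0 + MvPolynomial.C r * MvPolynomial.X 1 ^ q) ^ k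
      * MvPolynomial.X 1 ^ (e - q * k) with hp'
  have hev' : ∀ x y : ℝ, MvPolynomial.eval ![x, y] p'
      = a * (x + r * y ^ q) ^ k * y ^ (e - q * k) := by
    intro x y; simp [hp']
  have : p = p' := by
    apply eq_of_eval_eq_off_axis
    intro x y hy
    rw [hev']
    have h1 := A1 hp (x / y ^ q) y
    rw [div_mul_cancel₀ _ (pow_ne_zero _ hy)] at h1
    rw [h1, hev]
    have hsplit : y ^ e = y ^ (e - q * k) * (y ^ q) ^ k := by
      rw [← pow_mul, ← pow_add]
      congr 1
      omega
    rw [hsplit]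
    have : (x / y ^ q + r) ^ k * (y ^ q) ^ k = (x + r * y ^ q) ^ k := by
      rw [← mul_pow]
      congr 1
      field_simp
    rw [← this]
    ring
  intro x y
  rw [this, hev']

end Stmt13

namespace Stmt13B

lemma tpos : ∀ᶠ t in 𝓝[>] (0:ℝ), 0 < t :=
  eventually_mem_nhdsWithin.mono (fun _ h => h)

lemma tendsto_pow_zero {k : ℕ} (hk : 1 ≤ k) :
    Tendsto (fun t : ℝ => t ^ k) (𝓝[>] (0:ℝ)) (𝓝 0) := by
  have h : Tendsto (fun t : ℝ => t ^ k) (𝓝 (0:ℝ)) (𝓝 ((0:ℝ) ^ k)) :=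
    (continuous_pow k).tendsto 0
  rw [zero_pow (by omega)] at h
  exact h.mono_left nhdsWithin_le_nhds

lemma L_apply (L : ℝ × ℝ →L[ℝ] ℝ × ℝ) (x y : ℝ) :
    L (x, y) = (x * (L (1,0)).1 + y * (L (0,1)).1, x * (L (1,0)).2 + y * (L (0,1)).2) := by
  have h : ((x,y) : ℝ × ℝ) = x • ((1:ℝ),(0:ℝ)) + y • ((0:ℝ),(1:ℝ)) := by
    simp [Prod.ext_iff]
  rw [h, map_add, map_smul, map_smul]
  simp [Prod.ext_iff, smul_eq_mul]

lemma arc_tendsto {q : ℕ} (hq : 2 ≤ q) (c : ℝ) :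
    Tendsto (fun t : ℝ => ((c * t ^ q, t) : ℝ × ℝ)) (𝓝[>] (0:ℝ)) (𝓝 (0 : ℝ × ℝ)) := by
  have hc : Continuous (fun t : ℝ => ((c * t ^ q, t) : ℝ × ℝ)) := by continuity
  have := hc.tendsto 0
  have h0 : ((c * 0 ^ q, (0:ℝ)) : ℝ × ℝ) = (0 : ℝ × ℝ) := by
    simp [zero_pow (by omega : q ≠ 0)]
  rw [h0] at this
  exact this.mono_left nhdsWithin_le_nhds

/-- slopes along the arcs `t ↦ (c t^q, t)`. -/
lemma arc_slope {q : ℕ} (hq : 2 ≤ q) (σ : ℝ × ℝ → ℝ × ℝ) (L : ℝ × ℝ →L[ℝ] ℝ × ℝ)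
    (hL : HasStrictFDerivAt σ L 0) (hσ0 : σ 0 = 0) (c : ℝ) :
    Tendsto (fun t : ℝ => (σ (c * t ^ q, t)).1 / t) (𝓝[>] (0:ℝ)) (𝓝 (L (0,1)).1) ∧
    Tendsto (fun t : ℝ => (σ (c * t ^ q, t)).2 / t) (𝓝[>] (0:ℝ)) (𝓝 (L (0,1)).2) := by
  have h0 : ((c * 0 ^ q, (0:ℝ)) : ℝ × ℝ) = (0 : ℝ × ℝ) := by
    simp [zero_pow (by omega : q ≠ 0)]
  have hpow : HasDerivAt (fun t : ℝ => c * t ^ q) 0 0 := by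
    have h1 : HasDerivAt (fun t : ℝ => t ^ q) ((q : ℝ) * 0 ^ (q - 1)) 0 := hasDerivAt_pow q 0
    rw [zero_pow (by omega), mul_zero] at h1
    have h2 := h1.const_mul c
    rwa [mul_zero] at h2
  have harc : HasDerivAt (fun t : ℝ => ((c * t ^ q, t) : ℝ × ℝ)) ((0,1) : ℝ × ℝ) 0 :=
    hpow.prodMk (hasDerivAt_id 0)
  have hcomp := (hL.hasFDerivAt (E := ℝ × ℝ)).comp_hasDerivAt_of_eq (0:ℝ) harc
    (by simpa using h0.symm)
  rw [hasDerivAt_iff_tendsto_slope] at hcomp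
  have hkey : Tendsto (fun t : ℝ => t⁻¹ • (σ (c * t ^ q, t) : ℝ × ℝ)) (𝓝[>] (0:ℝ))
      (𝓝 (L (0,1))) := by
    have hc : ∀ t : ℝ, slope (σ ∘ fun t : ℝ => ((c * t ^ q, t) : ℝ × ℝ)) 0 t
        = t⁻¹ • (σ (c * t ^ q, t) : ℝ × ℝ) := by
      intro t
      rw [slope_def_module]
      simp [Function.comp, h0, hσ0]
    have := hcomp.congr hc
    exact this.mono_left (nhdsWithin_mono 0 (fun x hx => ne_of_gt hx))
  constructor
  · have := ((continuous_fst.tendsto (L (0,1))).comp hkey)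
    apply this.congr
    intro t
    simp [div_eq_inv_mul]
  · have := ((continuous_snd.tendsto (L (0,1))).comp hkey)
    apply this.congr
    intro t
    simp [div_eq_inv_mul]

/-- strict-derivative difference estimate along two arcs. -/
lemma strict_diff {q : ℕ} (hq : 2 ≤ q) (σ : ℝ × ℝ → ℝ × ℝ) (L : ℝ × ℝ →L[ℝ] ℝ × ℝ)
    (hL : HasStrictFDerivAt σ L 0) (c c' : ℝ) :
    Tendsto (fun t : ℝ => ((σ (c * t ^ q, t)).1 - (σ (c' * t ^ q, t)).1) / t ^ q)
      (𝓝[>] (0:ℝ)) (𝓝 ((c - c') * (L (1,0)).1)) ∧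
    Tendsto (fun t : ℝ => ((σ (c * t ^ q, t)).2 - (σ (c' * t ^ q, t)).2) / t ^ q)
      (𝓝[>] (0:ℝ)) (𝓝 ((c - c') * (L (1,0)).2)) := by
  have hu : Tendsto (fun t : ℝ => (((c * t ^ q, t) : ℝ × ℝ), ((c' * t ^ q, t) : ℝ × ℝ)))
      (𝓝[>] (0:ℝ)) (𝓝 ((0 : ℝ × ℝ), (0 : ℝ × ℝ))) :=
    (arc_tendsto hq c).prodMk_nhds (arc_tendsto hq c')
  have o1 := hL.isLittleO.comp_tendsto hu
  set N : ℝ → ℝ × ℝ := fun t =>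
    σ (c * t ^ q, t) - σ (c' * t ^ q, t) - ((c - c') * t ^ q) • ((L (1,0)) : ℝ × ℝ) with hN
  have hdiff : ∀ t : ℝ, (((c * t ^ q, t) : ℝ × ℝ)) - ((c' * t ^ q, t) : ℝ × ℝ)
      = ((c - c') * t ^ q) • ((1:ℝ), (0:ℝ)) := by
    intro t
    simp [Prod.ext_iff]
    ring
  have o2 : N =o[𝓝[>] (0:ℝ)] (fun t : ℝ => t ^ q) := by
    have hO : (fun t : ℝ => (((c * t ^ q, t) : ℝ × ℝ)) - ((c' * t ^ q, t) : ℝ × ℝ))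
        =O[𝓝[>] (0:ℝ)] (fun t : ℝ => t ^ q) := by
      rw [Asymptotics.isBigO_iff]
      refine ⟨|c - c'|, Filter.Eventually.of_forall (fun t => ?_)⟩
      rw [hdiff t, norm_smul]
      have h1 : ‖((1:ℝ),(0:ℝ))‖ = 1 := by simp [Prod.norm_def]
      rw [h1, mul_one, Real.norm_eq_abs, Real.norm_eq_abs, abs_mul]
    have o1' := o1.trans_isBigO hO
    apply o1'.congr_left
    intro t
    simp only [Function.comp_apply]
    rw [hdiff t, map_smul, hN]
  have key : ∀ (π : ℝ × ℝ → ℝ) (hπ : ∀ v : ℝ × ℝ, |π v| ≤ ‖v‖)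
      (hlin : ∀ (a b : ℝ × ℝ), π (a - b) = π a - π b)
      (hsm : ∀ (r : ℝ) (v : ℝ × ℝ), π (r • v) = r * π v),
      Tendsto (fun t : ℝ => (π (σ (c * t ^ q, t)) - π (σ (c' * t ^ q, t))) / t ^ q)
        (𝓝[>] (0:ℝ)) (𝓝 ((c - c') * π (L (1,0)))) := by
    intro π hπ hlin hsm
    have oπ : (fun t => π (N t)) =o[𝓝[>] (0:ℝ)] (fun t : ℝ => t ^ q) := by
      refine (Asymptotics.isBigO_of_le _ ?_).trans_isLittleO o2
      intro t
      calc ‖π (N t)‖ = |π (N t)| := rfl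
        _ ≤ ‖N t‖ := hπ (N t)
    have h0 := oπ.tendsto_div_nhds_zero
    have := h0.add_const ((c - c') * π (L (1,0)))
    rw [zero_add] at this
    apply this.congr'
    filter_upwards [tpos] with t ht
    have htq : (t : ℝ) ^ q ≠ 0 := pow_ne_zero _ (ne_of_gt ht)
    rw [hN]
    rw [hlin, hlin, hsm]
    field_simp
    ring
  constructor
  · exact key (fun v => v.1) (fun v => by simpa using norm_fst_le v)
      (fun a b => rfl) (fun r v => rfl)
  · exact key (fun v => v.2) (fun v => by simpa using norm_snd_le v)
      (fun a b => rfl) (fun r v => rfl)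

end Stmt13B

namespace Stmt13C

lemma seq_tendsto : Tendsto (fun k : ℕ => 1/((k:ℝ)+1)) atTop (𝓝[>] (0:ℝ)) := by
  rw [tendsto_nhdsWithin_iff]
  refine ⟨tendsto_one_div_add_atTop_nhds_zero_nat, ?_⟩
  filter_upwards with k
  simp only [Set.mem_Ioi]
  positivity

lemma exists_subseq (s₀ : ℕ → ℝ) (hs₀ : Tendsto s₀ atTop (𝓝[>] (0:ℝ))) (u : ℝ → ℝ) (C : ℝ)
    (hb : ∃ᶠ k in atTop, |u (s₀ k)| ≤ C) :
    ∃ (s : ℕ → ℝ) (ω : ℝ), Tendsto s atTop (𝓝[>] (0:ℝ)) ∧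
      Tendsto (fun j => u (s j)) atTop (𝓝 ω) := by
  obtain ⟨φ, hφ, hφP⟩ := Filter.extraction_of_frequently_atTop hb
  have hmem : ∀ k, u (s₀ (φ k)) ∈ Set.Icc (-C) C := fun k => by
    have := abs_le.mp (hφP k); exact ⟨this.1, this.2⟩
  obtain ⟨ω, -, ψ, hψ, hconv⟩ :=
    tendsto_subseq_of_bounded (Metric.isBounded_Icc (-C) C) hmem
  refine ⟨fun j => s₀ (φ (ψ j)), ω, ?_, ?_⟩
  · exact hs₀.comp ((hφ.comp hψ).tendsto_atTop)
  · exact hconv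

lemma abs_dichotomy (v : ℕ → ℝ) :
    (∃ C, ∃ᶠ k in atTop, |v k| ≤ C) ∨ Tendsto (fun k => |v k|) atTop atTop := by
  by_cases h : ∃ C, ∃ᶠ k in atTop, |v k| ≤ C
  · exact Or.inl h
  · right
    push_neg at h
    rw [tendsto_atTop]
    intro M
    have hM := h M
    exact hM.mono (fun k hk => le_of_lt hk)

lemma abs_atTop_of_pow {α : Type*} {F : Filter α} (w : α → ℝ) {l : ℕ} (hl : 1 ≤ l)
    (h : Tendsto (fun x => |w x ^ l|) F atTop) : Tendsto (fun x => |w x|) F atTop := by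
  rw [tendsto_atTop] at h ⊢
  intro M
  have := h ((max M 1) ^ l)
  filter_upwards [this] with x hx
  have h1 : |w x| ^ l = |w x ^ l| := (abs_pow _ _).symm
  have h2 : (max M 1) ^ l ≤ |w x| ^ l := by rw [h1]; exact hx
  have h3 : max M 1 ≤ |w x| := by
    by_contra hc
    push_neg at hc
    have h4 := pow_lt_pow_left₀ hc (abs_nonneg (w x)) (by omega : l ≠ 0)
    linarith
  exact le_trans (le_max_left M 1) h3

lemma tendsto_zero_of_pow {α : Type*} {F : Filter α} (w : α → ℝ) {l : ℕ} (hl : 1 ≤ l)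
    (h : Tendsto (fun x => w x ^ l) F (𝓝 0)) : Tendsto w F (𝓝 0) := by
  rw [NormedAddCommGroup.tendsto_nhds_zero] at h ⊢
  intro ε hε
  filter_upwards [h (ε ^ l) (pow_pos hε l)] with x hx
  rw [Real.norm_eq_abs] at hx ⊢
  by_contra hc
  push_neg at hc
  have : ε ^ l ≤ |w x| ^ l := pow_le_pow_left₀ hε.le hc l
  rw [abs_pow] at hx
  linarith

lemma eventually_bounded_of_pow {α : Type*} {F : Filter α} (w : α → ℝ) {l : ℕ} (hl : 1 ≤ l)
    {A : ℝ} (h : Tendsto (fun x => w x ^ l) F (𝓝 A)) :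
    ∀ᶠ x in F, |w x| ≤ max 1 (|A| + 1) := by
  have habs : Tendsto (fun x => |w x ^ l|) F (𝓝 |A|) := h.abs
  have hev : ∀ᶠ x in F, |w x ^ l| ≤ |A| + 1 := by
    have := habs.eventually_le_const (by linarith : |A| < |A| + 1)
    exact this
  filter_upwards [hev] with x hx
  rcases le_or_gt (|w x|) 1 with h1 | h1
  · exact le_trans h1 (le_max_left _ _)
  · have : |w x| ≤ |w x| ^ l := le_self_pow₀ h1.le (by omega)
    rw [abs_pow] at hx
    exact le_trans this (le_trans hx (le_max_right _ _))

lemma exists_two_values (P : Polynomial ℝ) (hP : 0 < P.natDegree) :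
    ∃ c₁ c₂ : ℝ, P.eval c₁ ≠ 0 ∧ P.eval c₂ ≠ 0 ∧ P.eval c₁ ≠ P.eval c₂ := by
  have hP0 : P ≠ 0 := fun h => by simp [h] at hP
  have hS0 : {x : ℝ | P.IsRoot x}.Finite := Polynomial.finite_setOf_isRoot hP0
  obtain ⟨c₂, hc₂⟩ := hS0.infinite_compl.nonempty
  have hc₂' : P.eval c₂ ≠ 0 := hc₂
  set Q := P - Polynomial.C (P.eval c₂) with hQ
  have hQ0 : Q ≠ 0 := by
    intro h
    rw [sub_eq_zero] at h
    have := Polynomial.natDegree_C (P.eval c₂)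
    rw [← h] at this
    omega
  have hS1 : {x : ℝ | Q.IsRoot x}.Finite := Polynomial.finite_setOf_isRoot hQ0
  obtain ⟨c₁, hc₁⟩ := (hS0.union hS1).infinite_compl.nonempty
  rw [Set.mem_compl_iff, Set.mem_union] at hc₁
  push_neg at hc₁
  refine ⟨c₁, c₂, hc₁.1, hc₂', ?_⟩
  have : Q.eval c₁ ≠ 0 := hc₁.2
  rw [hQ] at this
  simp only [Polynomial.eval_sub, Polynomial.eval_C] at this
  exact sub_ne_zero.mp this

lemma inv_tendsto_zero {α : Type*} {F : Filter α} (z : α → ℝ)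
    (hz : Tendsto (fun x => |z x|) F atTop) : Tendsto (fun x => (z x)⁻¹) F (𝓝 0) := by
  rw [NormedAddCommGroup.tendsto_nhds_zero]
  intro ε hε
  have := (tendsto_atTop.mp hz) (1/ε + 1)
  filter_upwards [this] with x hx
  rw [Real.norm_eq_abs, abs_inv]
  have h1 : 0 < |z x| := lt_of_lt_of_le (by positivity) hx
  rw [inv_lt_comm₀ h1 hε]
  calc ε⁻¹ < 1/ε + 1 := by rw [one_div]; linarith
    _ ≤ |z x| := hx

lemma eval_div_leading (P : Polynomial ℝ) (hP : P ≠ 0) {α : Type*} {F : Filter α} (z : α → ℝ)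
    (hz : Tendsto (fun x => |z x|) F atTop) :
    Tendsto (fun x => P.eval (z x) / (P.leadingCoeff * z x ^ P.natDegree)) F (𝓝 1) := by
  set n := P.natDegree with hn
  set b := P.leadingCoeff with hb
  have hb0 : b ≠ 0 := Polynomial.leadingCoeff_ne_zero.mpr hP
  have hinv := inv_tendsto_zero z hz
  have hterm : ∀ j ∈ Finset.range (n+1),
      Tendsto (fun x => (P.coeff j / b) * ((z x)⁻¹) ^ (n - j)) F
        (𝓝 ((P.coeff j / b) * (0:ℝ) ^ (n - j))) := by
    intro j _
    exact ((hinv.pow (n-j)).const_mul _)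
  have hsum := tendsto_finset_sum (Finset.range (n+1)) hterm
  have hval : (∑ j ∈ Finset.range (n+1), (P.coeff j / b) * (0:ℝ) ^ (n - j)) = 1 := by
    rw [Finset.sum_eq_single n]
    · rw [Nat.sub_self, pow_zero, mul_one]
      show P.coeff P.natDegree / P.leadingCoeff = 1
      rw [Polynomial.coeff_natDegree]
      exact div_self hb0
    · intro j hj hjn
      rw [Finset.mem_range] at hj
      rw [zero_pow (by omega : n - j ≠ 0), mul_zero]
    · intro h
      exact absurd (Finset.self_mem_range_succ n) h
  rw [hval] at hsum
  apply hsum.congr'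
  have hev : ∀ᶠ x in F, 1 ≤ |z x| := (tendsto_atTop.mp hz) 1
  filter_upwards [hev] with x hx
  have hz0 : z x ≠ 0 := by
    intro h; rw [h] at hx; norm_num at hx
  rw [Polynomial.eval_eq_sum_range, Finset.sum_div]
  apply Finset.sum_congr rfl
  intro j hj
  rw [Finset.mem_range] at hj
  have hjn : j ≤ n := by omega
  have hsplit : z x ^ n = z x ^ j * z x ^ (n - j) := by
    rw [← pow_add]; congr 1; omega
  field_simp
  rw [hsplit, one_div, inv_pow]
  field_simp

end Stmt13C


namespace Stmt13C

lemma atTop_mul_tendsto_pos {α : Type*} {F : Filter α} {f g : α → ℝ} {C : ℝ} (hC : 0 < C)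
    (hf : Tendsto f F atTop) (hg : Tendsto g F (𝓝 C)) :
    Tendsto (fun x => f x * g x) F atTop := by
  rw [tendsto_atTop] at hf ⊢
  intro M
  have hg' : ∀ᶠ x in F, C/2 ≤ g x := hg.eventually_const_le (by linarith)
  filter_upwards [hf (max 0 (M/(C/2))), hg'] with x h1 h2
  have hf0 : 0 ≤ f x := le_trans (le_max_left _ _) h1
  have hC2 : (0:ℝ) < C/2 := by linarith
  calc M = (M/(C/2)) * (C/2) := by field_simp
    _ ≤ f x * (C/2) := mul_le_mul_of_nonneg_right (le_trans (le_max_right _ _) h1) hC2.le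
    _ ≤ f x * g x := mul_le_mul_of_nonneg_left h2 hf0

end Stmt13C

namespace Stmt13

open Stmt13B Stmt13C

lemma CONSTLIM {A B : ℝ} {h : ℝ → ℝ} (hev : ∀ᶠ t in 𝓝[>] (0:ℝ), A = h t)
    (hlim : Tendsto h (𝓝[>] (0:ℝ)) (𝓝 B)) : A = B := by
  have h1 : Tendsto (fun _ : ℝ => A) (𝓝[>] (0:ℝ)) (𝓝 B) :=
    hlim.congr' (hev.mono fun t ht => ht.symm)
  exact tendsto_nhds_unique tendsto_const_nhds h1

lemma CANCEL {N₁ N₂ : ℕ} (u v : ℝ → ℝ) (hle : N₁ ≤ N₂)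
    (hev : ∀ᶠ t in 𝓝[>] (0:ℝ), t ^ N₁ * u t = t ^ N₂ * v t) :
    ∀ᶠ t in 𝓝[>] (0:ℝ), u t = t ^ (N₂ - N₁) * v t := by
  filter_upwards [hev, tpos] with t h1 h2
  have hsplit : t ^ N₂ = t ^ N₁ * t ^ (N₂ - N₁) := by rw [← pow_add]; congr 1; omega
  rw [hsplit, mul_assoc] at h1
  exact mul_left_cancel₀ (pow_ne_zero _ (ne_of_gt h2)) h1

lemma step1 {q : ℕ} (hq : 2 ≤ q)
    (f g : MvPolynomial (Fin 2) ℝ) (hg0 : g ≠ 0) (df dg : ℕ)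
    (hf : f.IsWeightedHomogeneous (W q) df)
    (hg : g.IsWeightedHomogeneous (W q) dg)
    (hfm : ¬ ∃ (A b : ℝ) (k l : ℕ), ∀ x y : ℝ,
      MvPolynomial.eval ![x, y] f = A * (x + b * y ^ q) ^ k * y ^ l)
    (σ : ℝ × ℝ → ℝ × ℝ) (L : ℝ × ℝ →L[ℝ] ℝ × ℝ)
    (hL : HasStrictFDerivAt σ L 0) (hσ0 : σ 0 = 0) (hinj : Function.Injective ⇑L)
    (hE : ∀ c : ℝ, ∀ᶠ t in 𝓝[>] (0:ℝ),
      t ^ df * (Psub f).eval c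
        = MvPolynomial.eval ![(σ (c * t ^ q, t)).1, (σ (c * t ^ q, t)).2] g) :
    (L (0,1)).1 = 0 := by
  by_contra hβ
  set β := (L (0,1)).1 with hβd
  set δ := (L (0,1)).2 with hδd
  set α := (L (1,0)).1 with hαd
  set γ := (L (1,0)).2 with hγd
  have PML : ∀ (a r : ℝ) (k : ℕ), q * k ≤ df →
      (∀ c : ℝ, (Psub f).eval c = a * (c + r) ^ k) → False := by
    intro a r k hk hev
    exact hfm ⟨a, r, k, df - q * k, A6 hf a r k hk hev⟩
  have PCONST : ∀ K : ℝ, (∀ c : ℝ, (Psub f).eval c = K) → False := by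
    intro K hK
    exact PML K 0 0 (by omega) (fun c => by rw [hK c]; ring)
  have hm1 : 0 < (Psub f).natDegree := by
    by_contra hm
    push_neg at hm
    have h0 : (Psub f).natDegree = 0 := by omega
    have hC := Polynomial.eq_C_of_natDegree_eq_zero h0
    exact PCONST ((Psub f).coeff 0) (fun c => by rw [hC]; simp)
  -- data for g
  have hPg0 : Psub g ≠ 0 := A5 hg hg0
  set n := (Psub g).natDegree with hn
  set bn := (Psub g).leadingCoeff with hbn
  have hbn0 : bn ≠ 0 := Polynomial.leadingCoeff_ne_zero.mpr hPg0
  have hcoeffn : (Psub g).coeff n ≠ 0 := by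
    rw [hn, Polynomial.coeff_natDegree]; exact hbn0
  have hqn : q * n ≤ dg := (A2 hg hcoeffn).1
  set lg := dg - q * n with hlg
  set hfun : ℝ → ℝ := fun w_ => ∑ j ∈ Finset.range (n+1), (Psub g).coeff j * w_ ^ (n - j)
    with hhfun
  have hfun_cont : Continuous hfun := by
    apply continuous_finset_sum
    intro j _
    exact continuous_const.mul (continuous_pow (n - j))
  have hfun0 : hfun 0 = bn := by
    rw [hhfun]
    simp only
    rw [Finset.sum_eq_single n]
    · rw [Nat.sub_self, pow_zero, mul_one, hn, Polynomial.coeff_natDegree, hbn]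
    · intro j hj hjn
      rw [Finset.mem_range] at hj
      rw [zero_pow (by omega : n - j ≠ 0), mul_zero]
    · intro hcon; exact absurd (Finset.self_mem_range_succ n) hcon
  have C1 : ∀ Xv Yv : ℝ, Xv ≠ 0 → MvPolynomial.eval ![Xv, Yv] g
      = Xv ^ n * Yv ^ lg * hfun (Yv ^ q / Xv) := by
    intro Xv Yv hXv
    rw [A3 hg, hhfun]
    simp only
    rw [Finset.mul_sum]
    apply Finset.sum_congr rfl
    intro j hj
    rw [Finset.mem_range] at hj
    have hjn : j ≤ n := by omega
    have hsplit : q * n = q * j + q * (n - j) := by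
      rw [← Nat.mul_add]; congr 1; omega
    have h1 : dg - q * j = lg + q * (n - j) := by omega
    have h2 : Xv ^ n = Xv ^ j * Xv ^ (n - j) := by rw [← pow_add]; congr 1; omega
    rw [h1, pow_add, h2, div_pow, ← pow_mul]
    field_simp
  -- arcs
  set Xc : ℝ → ℝ → ℝ := fun c t => (σ (c * t ^ q, t)).1 with hXcd
  set Yc : ℝ → ℝ → ℝ := fun c t => (σ (c * t ^ q, t)).2 with hYcd
  have hX : ∀ c : ℝ, Tendsto (fun t => Xc c t / t) (𝓝[>] (0:ℝ)) (𝓝 β) :=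
    fun c => (arc_slope hq σ L hL hσ0 c).1
  have hY : ∀ c : ℝ, Tendsto (fun t => Yc c t / t) (𝓝[>] (0:ℝ)) (𝓝 δ) :=
    fun c => (arc_slope hq σ L hL hσ0 c).2
  have hdY : ∀ c c' : ℝ, Tendsto (fun t => (Yc c t - Yc c' t) / t ^ q) (𝓝[>] (0:ℝ))
      (𝓝 ((c - c') * γ)) := fun c c' => (strict_diff hq σ L hL c c').2
  have hXne : ∀ c : ℝ, ∀ᶠ t in 𝓝[>] (0:ℝ), Xc c t ≠ 0 := by
    intro c
    filter_upwards [(hX c).eventually_ne hβ] with t h1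
    intro h0
    apply h1
    rw [h0, zero_div]
  have hW : ∀ c : ℝ, Tendsto (fun t => Yc c t ^ q / Xc c t) (𝓝[>] (0:ℝ)) (𝓝 0) := by
    intro c
    have hinv : Tendsto (fun t => t / Xc c t) (𝓝[>] (0:ℝ)) (𝓝 β⁻¹) := by
      have h1 := (hX c).inv₀ hβ
      apply h1.congr
      intro t
      rw [inv_div]
    have hmain := (((hY c).pow q).mul (tendsto_pow_zero (by omega : 1 ≤ q - 1))).mul hinv
    rw [mul_zero, zero_mul] at hmain
    apply hmain.congr'
    filter_upwards [tpos] with t ht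
    have htne : t ≠ 0 := ne_of_gt ht
    by_cases hx0 : Xc c t = 0
    · simp [hx0]
    · rw [div_pow]
      field_simp
      have htq : t ^ q = t * t ^ (q-1) := by rw [← pow_succ']; congr 1; omega
      rw [htq]; ring
  have hHW : ∀ c : ℝ, Tendsto (fun t => hfun (Yc c t ^ q / Xc c t)) (𝓝[>] (0:ℝ)) (𝓝 bn) := by
    intro c
    have h1 := (hfun_cont.tendsto 0).comp (hW c)
    rwa [hfun0] at h1
  have hE' : ∀ c : ℝ, ∀ᶠ t in 𝓝[>] (0:ℝ),
      t ^ df * (Psub f).eval c = Xc c t ^ n * Yc c t ^ lg * hfun (Yc c t ^ q / Xc c t) := by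
    intro c
    filter_upwards [hE c, hXne c] with t h1 h2
    rw [h1]
    exact C1 _ _ h2
  by_cases hcase : δ ≠ 0 ∨ lg = 0
  · -- merged case: limit D0 of Θ is nonzero
    set D0 := δ ^ lg * (β ^ n * bn) with hD0
    have hD00 : D0 ≠ 0 := by
      rcases hcase with hd | hl
      · exact mul_ne_zero (pow_ne_zero _ hd) (mul_ne_zero (pow_ne_zero _ hβ) hbn0)
      · rw [hD0, hl, pow_zero, one_mul]
        exact mul_ne_zero (pow_ne_zero _ hβ) hbn0
    set Θ : ℝ → ℝ → ℝ := fun c t =>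
      (Yc c t / t) ^ lg * ((Xc c t / t) ^ n * hfun (Yc c t ^ q / Xc c t)) with hΘd
    have hΘ : ∀ c : ℝ, Tendsto (Θ c) (𝓝[>] (0:ℝ)) (𝓝 D0) :=
      fun c => ((hY c).pow lg).mul (((hX c).pow n).mul (hHW c))
    have hEq : ∀ c : ℝ, ∀ᶠ t in 𝓝[>] (0:ℝ),
        t ^ df * (Psub f).eval c = t ^ (n + lg) * Θ c t := by
      intro c
      filter_upwards [hE' c, tpos] with t h1 h2
      rw [h1, hΘd]
      simp only
      have ht : t ≠ 0 := ne_of_gt h2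
      rw [pow_add, div_pow, div_pow]
      field_simp
    rcases lt_trichotomy df (n + lg) with h | h | h
    · apply PCONST 0
      intro c
      have hred := CANCEL _ _ (le_of_lt h) (hEq c)
      have hlim := (tendsto_pow_zero (by omega : 1 ≤ (n + lg) - df)).mul (hΘ c)
      rw [zero_mul] at hlim
      exact CONSTLIM hred hlim
    · apply PCONST D0
      intro c
      have hred := CANCEL _ _ (le_of_eq h) (hEq c)
      have h0 : (n + lg) - df = 0 := by omega
      rw [h0] at hred
      have hred' : ∀ᶠ t in 𝓝[>] (0:ℝ), (Psub f).eval c = Θ c t := by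
        filter_upwards [hred] with t ht
        rwa [pow_zero, one_mul] at ht
      exact CONSTLIM hred' (hΘ c)
    · exfalso
      have hEq' : ∀ᶠ t in 𝓝[>] (0:ℝ),
          t ^ (n + lg) * Θ 0 t = t ^ df * (Psub f).eval 0 :=
        (hEq 0).mono (fun t ht => ht.symm)
      have hred := CANCEL (N₁ := n + lg) (N₂ := df) _ _ (le_of_lt h) hEq'
      have hlim : Tendsto (fun t : ℝ => t ^ (df - (n + lg)) * (Psub f).eval 0)
          (𝓝[>] (0:ℝ)) (𝓝 0) := by
        have h1 := (tendsto_pow_zero (by omega : 1 ≤ df - (n + lg))).mul_const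
          ((Psub f).eval 0)
        rwa [zero_mul] at h1
      have h2 : Tendsto (Θ 0) (𝓝[>] (0:ℝ)) (𝓝 0) :=
        hlim.congr' (hred.mono fun t ht => ht.symm)
      exact hD00 (tendsto_nhds_unique (hΘ 0) h2)
  · -- δ = 0 and lg ≥ 1
    push_neg at hcase
    obtain ⟨hδ0, hlg1⟩ := hcase
    have hγ : γ ≠ 0 := by
      intro hγ0
      have hker : L (β, -α) = ((0:ℝ), (0:ℝ)) := by
        rw [Stmt13B.L_apply]
        rw [← hαd, ← hβd, ← hγd, ← hδd, hγ0, hδ0]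
        simp
        ring
      have h0 : L 0 = 0 := map_zero L
      have h1 : ((β, -α) : ℝ × ℝ) = 0 := hinj (by rw [hker, h0]; rfl)
      rw [Prod.ext_iff] at h1
      exact hβ h1.1
    set w : ℝ → ℝ → ℝ := fun c t => Yc c t / t ^ q with hwd
    have hdw : ∀ c c' : ℝ, Tendsto (fun t => w c t - w c' t) (𝓝[>] (0:ℝ))
        (𝓝 ((c - c') * γ)) := by
      intro c c'
      apply (hdY c c').congr
      intro t
      rw [hwd]
      exact sub_div _ _ _
    set Ξ : ℝ → ℝ → ℝ := fun c t => (Xc c t / t) ^ n * hfun (Yc c t ^ q / Xc c t) with hΞd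
    set B0 := β ^ n * bn with hB0
    have hB00 : B0 ≠ 0 := mul_ne_zero (pow_ne_zero _ hβ) hbn0
    have hΞl : ∀ c : ℝ, Tendsto (Ξ c) (𝓝[>] (0:ℝ)) (𝓝 B0) :=
      fun c => ((hX c).pow n).mul (hHW c)
    set N := n + q * lg with hN
    have hEq : ∀ c : ℝ, ∀ᶠ t in 𝓝[>] (0:ℝ),
        t ^ df * (Psub f).eval c = t ^ N * (w c t ^ lg * Ξ c t) := by
      intro c
      filter_upwards [hE' c, tpos] with t h1 h2
      rw [h1, hwd, hΞd]
      simp only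
      have ht : t ≠ 0 := ne_of_gt h2
      rw [hN, pow_add, div_pow, div_pow, pow_mul]
      field_simp
    rcases lt_trichotomy df N with h | h | h
    · -- df < N : ratio contradiction
      exfalso
      obtain ⟨c₁, c₂, hv₁, hv₂, hvne⟩ := exists_two_values (Psub f) hm1
      have hred : ∀ c : ℝ, ∀ᶠ t in 𝓝[>] (0:ℝ),
          (Psub f).eval c = t ^ (N - df) * (w c t ^ lg * Ξ c t) :=
        fun c => CANCEL _ _ (le_of_lt h) (hEq c)
      have hprodinf : ∀ c : ℝ, (Psub f).eval c ≠ 0 →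
          Tendsto (fun t => |w c t ^ lg * Ξ c t|) (𝓝[>] (0:ℝ)) atTop := by
        intro c hc
        have htΔ : Tendsto (fun t : ℝ => t ^ (N - df)) (𝓝[>] (0:ℝ)) (𝓝[>] (0:ℝ)) := by
          rw [tendsto_nhdsWithin_iff]
          refine ⟨tendsto_pow_zero (by omega), ?_⟩
          filter_upwards [tpos] with t ht
          exact pow_pos ht _
        have hinvΔ := htΔ.inv_tendsto_nhdsGT_zero
        have hconst := hinvΔ.const_mul_atTop (abs_pos.mpr hc)
        apply hconst.congr'
        filter_upwards [hred c, tpos] with t h1 h2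
        have htne : (t:ℝ) ^ (N - df) ≠ 0 := pow_ne_zero _ (ne_of_gt h2)
        rw [Pi.inv_apply]
        rw [eq_comm, ← abs_of_pos (pow_pos h2 (N - df)), ← abs_inv, ← abs_mul]
        rw [h1]
        congr 1
        field_simp
      have hwinf : ∀ c : ℝ, (Psub f).eval c ≠ 0 →
          Tendsto (fun t => |w c t|) (𝓝[>] (0:ℝ)) atTop := by
        intro c hc
        apply abs_atTop_of_pow _ (by omega : 1 ≤ lg)
        have h1 := atTop_mul_tendsto_pos (C := |B0|⁻¹) (by positivity)
          (hprodinf c hc) (((hΞl c).abs).inv₀ (abs_ne_zero.mpr hB00))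
        apply h1.congr'
        filter_upwards [(hΞl c).eventually_ne hB00] with t ht
        rw [abs_mul, mul_assoc, mul_inv_cancel₀ (abs_ne_zero.mpr ht), mul_one, abs_pow]
      have hw1 := hwinf c₁ hv₁
      have hw2 := hwinf c₂ hv₂
      -- ratio tends to 1
      have hww : Tendsto (fun t => w c₁ t / w c₂ t) (𝓝[>] (0:ℝ)) (𝓝 1) := by
        have h1 := (hdw c₁ c₂).mul (inv_tendsto_zero (w c₂) hw2)
        rw [mul_zero] at h1
        have h2 := tendsto_const_nhds (α := ℝ) (x := (1:ℝ)) (f := 𝓝[>] (0:ℝ)).add h1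
        rw [add_zero] at h2
        apply h2.congr'
        filter_upwards [hw2.eventually_ge_atTop 1] with t ht
        have hw2ne : w c₂ t ≠ 0 := by
          intro h0; rw [h0] at ht; simp at ht; linarith
        field_simp
        ring
      have hΞr : Tendsto (fun t => Ξ c₁ t / Ξ c₂ t) (𝓝[>] (0:ℝ)) (𝓝 1) := by
        have h1 := (hΞl c₁).div (hΞl c₂) hB00
        rwa [div_self hB00] at h1
      have hR : Tendsto (fun t => (w c₁ t ^ lg * Ξ c₁ t) / (w c₂ t ^ lg * Ξ c₂ t))
          (𝓝[>] (0:ℝ)) (𝓝 1) := by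
        have h1 := (hww.pow lg).mul hΞr
        rw [one_pow, mul_one] at h1
        apply h1.congr
        intro t
        rw [div_pow, div_mul_div_comm]
      -- conclude Pf c₁ = Pf c₂
      have hfin : (Psub f).eval c₁ = (Psub f).eval c₂ := by
        have hlim : Tendsto (fun t => (Psub f).eval c₂
            * ((w c₁ t ^ lg * Ξ c₁ t) / (w c₂ t ^ lg * Ξ c₂ t))) (𝓝[>] (0:ℝ))
            (𝓝 ((Psub f).eval c₂)) := by
          have h1 := hR.const_mul ((Psub f).eval c₂)
          rwa [mul_one] at h1
        apply CONSTLIM _ hlim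
        have hA2ne : ∀ᶠ t in 𝓝[>] (0:ℝ), w c₂ t ^ lg * Ξ c₂ t ≠ 0 := by
          filter_upwards [(hprodinf c₂ hv₂).eventually_ge_atTop 1] with t ht
          intro h0
          rw [h0] at ht; simp at ht; linarith
        filter_upwards [hred c₁, hred c₂, hA2ne, tpos] with t h1 h2 h3 h4
        rw [h1, h2]
        have htne : (t:ℝ) ^ (N - df) ≠ 0 := pow_ne_zero _ (ne_of_gt h4)
        have h3a := left_ne_zero_of_mul h3
        have h3b := right_ne_zero_of_mul h3
        field_simp
      exact hvne hfin
    · -- df = N : monomial-like contradiction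
      have hwlim : ∀ c : ℝ, Tendsto (fun t => w c t ^ lg) (𝓝[>] (0:ℝ))
          (𝓝 ((Psub f).eval c / B0)) := by
        intro c
        have hev := CANCEL _ _ (le_of_eq h) (hEq c)
        have h0 : N - df = 0 := by omega
        rw [h0] at hev
        have hev' : ∀ᶠ t in 𝓝[>] (0:ℝ), w c t ^ lg * Ξ c t = (Psub f).eval c := by
          filter_upwards [hev] with t ht
          rw [ht, pow_zero, one_mul]
        have h1 : Tendsto (fun t => (Psub f).eval c / Ξ c t) (𝓝[>] (0:ℝ))
            (𝓝 ((Psub f).eval c / B0)) := tendsto_const_nhds.div (hΞl c) hB00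
        apply h1.congr'
        filter_upwards [hev', (hΞl c).eventually_ne hB00] with t h2 h3
        rw [← h2]
        field_simp
      have hbound := eventually_bounded_of_pow (w 0) (by omega : 1 ≤ lg) (hwlim 0)
      have hfreq := (seq_tendsto.eventually hbound).frequently
      obtain ⟨s, ω, hs, hsconv⟩ := exists_subseq _ seq_tendsto (w 0) _ hfreq
      have hkey : ∀ c : ℝ, (Psub f).eval c = B0 * (γ * c + ω) ^ lg := by
        intro c
        have h2 := (hdw c 0).comp hs
        have h1 : Tendsto (fun j => w c (s j)) atTop (𝓝 (ω + c * γ)) := by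
          have h3 := hsconv.add h2
          have h4 : (fun j => w 0 (s j) + ((fun t => w c t - w 0 t) ∘ s) j)
              = fun j => w c (s j) := by
            funext j; simp [Function.comp]
          rw [h4] at h3
          have h5 : ω + (c - 0) * γ = ω + c * γ := by ring
          rwa [h5] at h3
        have h3 := h1.pow lg
        have h4 := (hwlim c).comp hs
        have h5 := tendsto_nhds_unique h4 h3
        rw [div_eq_iff hB00] at h5
        rw [h5]
        ring
      apply PML (B0 * γ ^ lg) (ω / γ) lg (by omega)
      intro c
      rw [hkey c]
      have h6 : γ * c + ω = γ * (c + ω / γ) := by field_simp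
      rw [h6, mul_pow]
      ring
    · -- df > N : w → 0, contradicting γ ≠ 0
      exfalso
      have hw0 : ∀ c : ℝ, Tendsto (w c) (𝓝[>] (0:ℝ)) (𝓝 0) := by
        intro c
        apply tendsto_zero_of_pow _ (by omega : 1 ≤ lg)
        have hev := CANCEL (N₁ := N) (N₂ := df) _ _ (le_of_lt h)
          ((hEq c).mono (fun t ht => ht.symm))
        have hlim0 : Tendsto (fun t : ℝ => t ^ (df - N) * (Psub f).eval c)
            (𝓝[>] (0:ℝ)) (𝓝 0) := by
          have h1 := (tendsto_pow_zero (by omega : 1 ≤ df - N)).mul_const ((Psub f).eval c)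
          rwa [zero_mul] at h1
        have hXlim : Tendsto (fun t => w c t ^ lg * Ξ c t) (𝓝[>] (0:ℝ)) (𝓝 0) :=
          hlim0.congr' (hev.mono fun t ht => ht.symm)
        have h1 := hXlim.div (hΞl c) hB00
        rw [zero_div] at h1
        apply h1.congr'
        filter_upwards [(hΞl c).eventually_ne hB00] with t ht
        simp only [Pi.div_apply]
        field_simp
      have h1 := hdw 1 0
      have h2 := (hw0 1).sub (hw0 0)
      rw [sub_zero] at h2
      have h3 := tendsto_nhds_unique h1 h2
      rw [sub_zero, one_mul] at h3
      exact hγ h3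

end Stmt13

namespace Stmt13C

lemma ratio_helper (A B Lc z1 z2 : ℝ) (hL : Lc ≠ 0) (h1 : z1 ≠ 0) (h2 : z2 ≠ 0)
    (hB : B ≠ 0) (n : ℕ) :
    (A / (Lc * z1 ^ n)) * ((z1 / z2) ^ n * (B / (Lc * z2 ^ n))⁻¹) = A / B := by
  rw [div_pow, inv_div]
  field_simp

lemma cross_helper (P1 P2 A1 A2 : ℝ) (hA2 : A2 ≠ 0) (h : P1 * A2 = P2 * A1) :
    P1 = P2 * (A1 / A2) := by
  field_simp
  linear_combination h

end Stmt13C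

namespace Stmt13
open Stmt13B Stmt13C


lemma step2 {q : ℕ} (hq : 2 ≤ q)
    (f g : MvPolynomial (Fin 2) ℝ) (hg0 : g ≠ 0) (df dg : ℕ)
    (hf : f.IsWeightedHomogeneous (W q) df)
    (hg : g.IsWeightedHomogeneous (W q) dg)
    (hfm : ¬ ∃ (A b : ℝ) (k l : ℕ), ∀ x y : ℝ,
      MvPolynomial.eval ![x, y] f = A * (x + b * y ^ q) ^ k * y ^ l)
    (σ : ℝ × ℝ → ℝ × ℝ) (L : ℝ × ℝ →L[ℝ] ℝ × ℝ)
    (hL : HasStrictFDerivAt σ L 0) (hσ0 : σ 0 = 0) (hinj : Function.Injective ⇑L)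
    (hE : ∀ c : ℝ, ∀ᶠ t in 𝓝[>] (0:ℝ),
      t ^ df * (Psub f).eval c
        = MvPolynomial.eval ![(σ (c * t ^ q, t)).1, (σ (c * t ^ q, t)).2] g)
    (hβ0 : (L (0,1)).1 = 0) :
    ∃ c₁ c₂ b : ℝ, c₁ ≠ 0 ∧ c₂ ≠ 0 ∧ ∀ x y : ℝ,
      MvPolynomial.eval ![x, y] f =
        MvPolynomial.eval ![c₁ * x - b * y ^ q, c₂ * y] g := by
  set β := (L (0,1)).1 with hβd
  set δ := (L (0,1)).2 with hδd
  set α := (L (1,0)).1 with hαd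
  set γ := (L (1,0)).2 with hγd
  -- nondegeneracy of the matrix entries
  have hδ : δ ≠ 0 := by
    intro h0
    have h1 : L (0,1) = ((0:ℝ), (0:ℝ)) := by
      rw [Prod.ext_iff]
      exact ⟨hβ0, h0⟩
    have h2 : ((0,1) : ℝ × ℝ) = 0 := hinj (by rw [h1, map_zero]; rfl)
    rw [Prod.ext_iff] at h2
    exact one_ne_zero h2.2
  have hα : α ≠ 0 := by
    intro h0
    have hker : L (δ, -γ) = ((0:ℝ), (0:ℝ)) := by
      rw [Stmt13B.L_apply, ← hαd, ← hβd, ← hγd, ← hδd, h0, hβ0]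
      simp
      ring
    have h1 : ((δ, -γ) : ℝ × ℝ) = 0 := hinj (by rw [hker, map_zero]; rfl)
    rw [Prod.ext_iff] at h1
    exact hδ h1.1
  -- basic polynomial data
  have PML : ∀ (a r : ℝ) (k : ℕ), q * k ≤ df →
      (∀ c : ℝ, (Psub f).eval c = a * (c + r) ^ k) → False := by
    intro a r k hk hev
    exact hfm ⟨a, r, k, df - q * k, A6 hf a r k hk hev⟩
  have PCONST : ∀ K : ℝ, (∀ c : ℝ, (Psub f).eval c = K) → False := by
    intro K hK
    exact PML K 0 0 (by omega) (fun c => by rw [hK c]; ring)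
  have hm1 : 0 < (Psub f).natDegree := by
    by_contra hm
    push_neg at hm
    have h0 : (Psub f).natDegree = 0 := by omega
    have hC := Polynomial.eq_C_of_natDegree_eq_zero h0
    exact PCONST ((Psub f).coeff 0) (fun c => by rw [hC]; simp)
  have hPg0 : Psub g ≠ 0 := A5 hg hg0
  have hGrep : ∀ Xv Yv : ℝ, Yv ≠ 0 →
      MvPolynomial.eval ![Xv, Yv] g = Yv ^ dg * (Psub g).eval (Xv / Yv ^ q) := by
    intro Xv Yv hYv
    have h1 := A1 hg (Xv / Yv ^ q) Yv
    rwa [div_mul_cancel₀ _ (pow_ne_zero _ hYv)] at h1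
  -- arcs
  set Xc : ℝ → ℝ → ℝ := fun c t => (σ (c * t ^ q, t)).1 with hXcd
  set Yc : ℝ → ℝ → ℝ := fun c t => (σ (c * t ^ q, t)).2 with hYcd
  have hY : ∀ c : ℝ, Tendsto (fun t => Yc c t / t) (𝓝[>] (0:ℝ)) (𝓝 δ) :=
    fun c => (arc_slope hq σ L hL hσ0 c).2
  have hdX : ∀ c c' : ℝ, Tendsto (fun t => (Xc c t - Xc c' t) / t ^ q) (𝓝[>] (0:ℝ))
      (𝓝 ((c - c') * α)) := fun c c' => (strict_diff hq σ L hL c c').1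
  set u : ℝ → ℝ → ℝ := fun c t => Xc c t / t ^ q with hud
  set z : ℝ → ℝ → ℝ := fun c t => Xc c t / Yc c t ^ q with hzd
  have hdu : ∀ c c' : ℝ, Tendsto (fun t => u c t - u c' t) (𝓝[>] (0:ℝ))
      (𝓝 ((c - c') * α)) := by
    intro c c'
    apply (hdX c c').congr
    intro t
    exact sub_div _ _ _
  have hYne : ∀ c : ℝ, ∀ᶠ t in 𝓝[>] (0:ℝ), Yc c t ≠ 0 := by
    intro c
    filter_upwards [(hY c).eventually_ne hδ] with t h1
    intro h0
    apply h1
    rw [h0, zero_div]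
  have htY : ∀ c : ℝ, Tendsto (fun t => t / Yc c t) (𝓝[>] (0:ℝ)) (𝓝 δ⁻¹) := by
    intro c
    have h1 := (hY c).inv₀ hδ
    apply h1.congr
    intro t
    rw [inv_div]
  have hzeq : ∀ c : ℝ, ∀ᶠ t in 𝓝[>] (0:ℝ), z c t = u c t * (t / Yc c t) ^ q := by
    intro c
    filter_upwards [tpos] with t ht
    have htne : t ≠ 0 := ne_of_gt ht
    by_cases hy0 : Yc c t = 0
    · rw [hzd, hud]
      simp [hy0, zero_pow (by omega : q ≠ 0)]
    · rw [hzd, hud]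
      simp only
      rw [div_pow, div_mul_div_comm, mul_comm (t ^ q) (Yc c t ^ q)]
      rw [mul_div_mul_right _ _ (pow_ne_zero _ htne)]
  have hE2 : ∀ c : ℝ, ∀ᶠ t in 𝓝[>] (0:ℝ),
      t ^ df * (Psub f).eval c = t ^ dg * ((Yc c t / t) ^ dg * (Psub g).eval (z c t)) := by
    intro c
    filter_upwards [hE c, hYne c, tpos] with t h1 h2 h3
    rw [h1, hGrep _ _ h2]
    rw [div_pow]
    have htne : (t:ℝ) ^ dg ≠ 0 := pow_ne_zero _ (ne_of_gt h3)
    field_simp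
    rfl
  obtain ⟨c₁, c₂, hv₁, hv₂, hvne⟩ := exists_two_values (Psub f) hm1
  rcases abs_dichotomy (fun k => u c₁ (1/((k:ℝ)+1))) with ⟨C, hfreq⟩ | hinf
  · -- bounded case : extract subsequence and conclude
    obtain ⟨s, ω, hs, hconv⟩ := exists_subseq _ seq_tendsto (u c₁) C hfreq
    set μ := ω - α * c₁ with hμd
    have hulim : ∀ c : ℝ, Tendsto (fun j => u c (s j)) atTop (𝓝 (α * c + μ)) := by
      intro c
      have h2 := (hdu c c₁).comp hs
      have h3 := hconv.add h2
      have h4 : (fun j => u c₁ (s j) + ((fun t => u c t - u c₁ t) ∘ s) j)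
          = fun j => u c (s j) := by
        funext j; simp [Function.comp]
      rw [h4] at h3
      have h5 : ω + (c - c₁) * α = α * c + μ := by rw [hμd]; ring
      rwa [h5] at h3
    have hzlim : ∀ c : ℝ, Tendsto (fun j => z c (s j)) atTop (𝓝 ((α * c + μ) / δ ^ q)) := by
      intro c
      have h1 := (hulim c).mul (((htY c).comp hs).pow q)
      have h2 : (α * c + μ) * (δ⁻¹) ^ q = (α * c + μ) / δ ^ q := by
        rw [inv_pow, div_eq_mul_inv]
      rw [h2] at h1
      apply h1.congr'
      filter_upwards [hs.eventually (hzeq c)] with j hj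
      rw [hj]
      rfl
    have hΛ : ∀ c : ℝ, Tendsto (fun j => (Yc c (s j) / (s j)) ^ dg * (Psub g).eval (z c (s j)))
        atTop (𝓝 (δ ^ dg * (Psub g).eval ((α * c + μ) / δ ^ q))) :=
      fun c => (((hY c).comp hs).pow dg).mul
        (((Polynomial.continuous (Psub g)).tendsto _).comp (hzlim c))
    rcases lt_trichotomy df dg with h | h | h
    · -- df < dg : Pf c₁ = 0, contradiction
      exfalso
      have hred := CANCEL _ _ (le_of_lt h) (hE2 c₁)
      have hlim : Tendsto (fun j => (s j) ^ (dg - df) *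
          ((Yc c₁ (s j) / (s j)) ^ dg * (Psub g).eval (z c₁ (s j)))) atTop (𝓝 0) := by
        have h1 := ((tendsto_pow_zero (by omega : 1 ≤ dg - df)).comp hs).mul (hΛ c₁)
        rwa [zero_mul] at h1
      have h2 : Tendsto (fun _ : ℕ => (Psub f).eval c₁) atTop (𝓝 0) := by
        apply hlim.congr'
        filter_upwards [hs.eventually hred] with j hj
        rw [← hj]
      exact hv₁ (tendsto_nhds_unique tendsto_const_nhds h2)
    · -- df = dg : the conclusion
      have hkey : ∀ c : ℝ, (Psub f).eval c = δ ^ dg * (Psub g).eval ((α * c + μ) / δ ^ q) := by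
        intro c
        have hred := CANCEL _ _ (le_of_eq h) (hE2 c)
        have h0 : dg - df = 0 := by omega
        rw [h0] at hred
        have hred' : ∀ᶠ t in 𝓝[>] (0:ℝ), (Psub f).eval c
            = (Yc c t / t) ^ dg * (Psub g).eval (z c t) := by
          filter_upwards [hred] with t ht
          rwa [pow_zero, one_mul] at ht
        have h2 : Tendsto (fun _ : ℕ => (Psub f).eval c) atTop
            (𝓝 (δ ^ dg * (Psub g).eval ((α * c + μ) / δ ^ q))) := by
          apply (hΛ c).congr'
          filter_upwards [hs.eventually hred'] with j hj
          rw [← hj]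
        exact tendsto_nhds_unique tendsto_const_nhds h2
      -- build the polynomial identity
      refine ⟨α, δ, -μ, hα, hδ, ?_⟩
      have hff : ∀ x y : ℝ, MvPolynomial.eval ![x, y] f
          = MvPolynomial.eval ![α * x + μ * y ^ q, δ * y] g := by
        -- via polynomial equality
        set sub : Fin 2 → MvPolynomial (Fin 2) ℝ :=
          ![MvPolynomial.C α * MvPolynomial.X 0 + MvPolynomial.C μ * MvPolynomial.X 1 ^ q,
            MvPolynomial.C δ * MvPolynomial.X 1] with hsub
        set g' : MvPolynomial (Fin 2) ℝ := MvPolynomial.eval₂ MvPolynomial.C sub g with hg'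
        have hg'eval : ∀ x y : ℝ, MvPolynomial.eval ![x, y] g'
            = MvPolynomial.eval ![α * x + μ * y ^ q, δ * y] g := by
          intro x y
          rw [hg', MvPolynomial.eval_eval₂]
          have hcomp : ((MvPolynomial.eval ![x, y]).comp MvPolynomial.C
              : ℝ →+* ℝ) = RingHom.id ℝ := by
            ext r
            simp
          rw [hcomp]
          have harg : (fun i => MvPolynomial.eval ![x, y] (sub i))
              = ![α * x + μ * y ^ q, δ * y] := by
            funext i
            fin_cases i <;> simp [hsub]
          rw [MvPolynomial.eval₂_id, harg]
        have hfeq : f = g' := by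
          apply eq_of_eval_eq_off_axis
          intro x y hy
          rw [hg'eval]
          have h1 := A1 hf (x / y ^ q) y
          rw [div_mul_cancel₀ _ (pow_ne_zero _ hy)] at h1
          rw [h1, hkey (x / y ^ q)]
          have hδy : δ * y ≠ 0 := mul_ne_zero hδ hy
          rw [hGrep _ _ hδy]
          have harg : (α * x + μ * y ^ q) / (δ * y) ^ q
              = (α * (x / y ^ q) + μ) / δ ^ q := by
            have h9 : α * (x / y ^ q) + μ = (α * x + μ * y ^ q) / y ^ q := by
              field_simp
            rw [mul_pow, h9, div_div, mul_comm (y ^ q) (δ ^ q), ← div_div, div_div]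
          rw [harg, ← h]
          ring
        intro x y
        rw [hfeq, hg'eval]
      intro x y
      rw [hff x y]
      have : α * x - -μ * y ^ q = α * x + μ * y ^ q := by ring
      rw [this]
    · -- df > dg : Pg has infinitely many roots
      exfalso
      have hroot : ∀ c : ℝ, (Psub g).eval ((α * c + μ) / δ ^ q) = 0 := by
        intro c
        have hE2' : ∀ᶠ t in 𝓝[>] (0:ℝ), t ^ dg *
            ((Yc c t / t) ^ dg * (Psub g).eval (z c t)) = t ^ df * (Psub f).eval c :=
          (hE2 c).mono (fun t ht => ht.symm)
        have hred := CANCEL (N₁ := dg) (N₂ := df) _ _ (le_of_lt h) hE2'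
        have hlim : Tendsto (fun j => (s j) ^ (df - dg) * (Psub f).eval c) atTop (𝓝 0) := by
          have h1 := ((tendsto_pow_zero (by omega : 1 ≤ df - dg)).comp hs).mul_const
            ((Psub f).eval c)
          rwa [zero_mul] at h1
        have h2 : Tendsto (fun j => (Yc c (s j) / (s j)) ^ dg * (Psub g).eval (z c (s j)))
            atTop (𝓝 0) := by
          apply hlim.congr'
          filter_upwards [hs.eventually hred] with j hj
          rw [← hj]
        have h3 := tendsto_nhds_unique (hΛ c) h2
        have h4 := mul_eq_zero.mp h3
        rcases h4 with h4 | h4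
        · exact absurd h4 (pow_ne_zero _ hδ)
        · exact h4
      have hinj2 : Function.Injective (fun c : ℝ => (α * c + μ) / δ ^ q) := by
        intro a b hab
        simp only at hab
        have hδq : (δ:ℝ) ^ q ≠ 0 := pow_ne_zero _ hδ
        rw [div_eq_div_iff hδq hδq] at hab
        have h2 := mul_right_cancel₀ hδq hab
        have h3 : α * a = α * b := by linarith
        exact mul_left_cancel₀ hα h3
      have hinf2 : {x : ℝ | (Psub g).IsRoot x}.Infinite := by
        apply Set.Infinite.mono (s := Set.range (fun c : ℝ => (α * c + μ) / δ ^ q))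
        · intro x hx
          obtain ⟨c, hc⟩ := hx
          rw [Set.mem_setOf_eq, Polynomial.IsRoot, ← hc]
          exact hroot c
        · exact Set.infinite_range_of_injective hinj2
      exact hPg0 (Polynomial.eq_zero_of_infinite_isRoot _ hinf2)
  · -- unbounded case : contradiction via ratios
    exfalso
    set T : ℕ → ℝ := fun k => 1/((k:ℝ)+1) with hT
    have hTs : Tendsto T atTop (𝓝[>] (0:ℝ)) := seq_tendsto
    have hbdd : Tendsto (fun k => |u c₂ (T k) - u c₁ (T k)|) atTop (𝓝 |(c₂ - c₁) * α|) :=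
      ((hdu c₂ c₁).comp hTs).abs
    have hu2 : Tendsto (fun k => |u c₂ (T k)|) atTop atTop := by
      set D := |(c₂ - c₁) * α| + 1 with hD
      have hev : ∀ᶠ k in atTop, |u c₂ (T k) - u c₁ (T k)| ≤ D :=
        hbdd.eventually_le_const (by rw [hD]; linarith)
      apply tendsto_atTop_mono' atTop (f₁ := fun k => |u c₁ (T k)| - D)
      · filter_upwards [hev] with k hk
        have h1 : |u c₁ (T k)| - |u c₂ (T k)| ≤ |u c₂ (T k) - u c₁ (T k)| := by
          rw [abs_sub_comm]
          exact abs_sub_abs_le_abs_sub _ _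
        linarith
      · have h1 := tendsto_atTop_add_const_right atTop (-D) hinf
        apply h1.congr
        intro k
        ring
    have hu1 : Tendsto (fun k => |u c₁ (T k)|) atTop atTop := hinf
    have hzabs : ∀ c : ℝ, Tendsto (fun k => |u c (T k)|) atTop atTop →
        Tendsto (fun k => |z c (T k)|) atTop atTop := by
      intro c hc
      have h1 := atTop_mul_tendsto_pos (C := |δ⁻¹| ^ q)
        (by positivity) hc ((((htY c).comp hTs).abs).pow q)
      apply h1.congr'
      filter_upwards [hTs.eventually (hzeq c)] with k hk
      rw [hk, abs_mul, abs_pow]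
      rfl
    have hz1 := hzabs c₁ hu1
    have hz2 := hzabs c₂ hu2
    set n := (Psub g).natDegree with hn
    set bg := (Psub g).leadingCoeff with hbg
    have hbg0 : bg ≠ 0 := Polynomial.leadingCoeff_ne_zero.mpr hPg0
    have hr1 := eval_div_leading (Psub g) hPg0 (fun k => z c₁ (T k)) hz1
    have hr2 := eval_div_leading (Psub g) hPg0 (fun k => z c₂ (T k)) hz2
    have hPgne : ∀ c : ℝ, Tendsto (fun k => |z c (T k)|) atTop atTop →
        Tendsto (fun k => (Psub g).eval (z c (T k)) /
          (bg * z c (T k) ^ n)) atTop (𝓝 1) →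
        ∀ᶠ k in atTop, (Psub g).eval (z c (T k)) ≠ 0 := by
      intro c hzc hrc
      filter_upwards [hrc.eventually_ne one_ne_zero] with k hk
      intro h0
      apply hk
      rw [h0, zero_div]
    have hne1 := hPgne c₁ hz1 hr1
    have hne2 := hPgne c₂ hz2 hr2
    have hzne1 : ∀ᶠ k in atTop, z c₁ (T k) ≠ 0 := by
      filter_upwards [hz1.eventually_ge_atTop 1] with k hk
      intro h0; rw [h0] at hk; simp at hk; linarith
    have hzne2 : ∀ᶠ k in atTop, z c₂ (T k) ≠ 0 := by
      filter_upwards [hz2.eventually_ge_atTop 1] with k hk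
      intro h0; rw [h0] at hk; simp at hk; linarith
    have hune2 : ∀ᶠ k in atTop, u c₂ (T k) ≠ 0 := by
      filter_upwards [hu2.eventually_ge_atTop 1] with k hk
      intro h0; rw [h0] at hk; simp at hk; linarith
    -- z ratio tends to 1
    have huu : Tendsto (fun k => u c₁ (T k) / u c₂ (T k)) atTop (𝓝 1) := by
      have h1 := ((hdu c₁ c₂).comp hTs).mul (inv_tendsto_zero (fun k => u c₂ (T k)) hu2)
      rw [mul_zero] at h1
      have hone : Tendsto (fun _ : ℕ => (1:ℝ)) atTop (𝓝 (1:ℝ)) := tendsto_const_nhds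
      have h2 := hone.add h1
      rw [add_zero] at h2
      apply h2.congr'
      filter_upwards [hune2] with k hk
      simp only [Function.comp]
      field_simp
      ring
    have htYr : Tendsto (fun k => (T k / Yc c₁ (T k)) ^ q / (T k / Yc c₂ (T k)) ^ q)
        atTop (𝓝 1) := by
      have h1 := (((htY c₁).comp hTs).pow q).div (((htY c₂).comp hTs).pow q)
        (pow_ne_zero _ (inv_ne_zero hδ))
      rwa [div_self (pow_ne_zero _ (inv_ne_zero hδ))] at h1
    have hzz : Tendsto (fun k => z c₁ (T k) / z c₂ (T k)) atTop (𝓝 1) := by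
      have h1 := huu.mul htYr
      rw [mul_one] at h1
      apply h1.congr'
      filter_upwards [hTs.eventually (hzeq c₁), hTs.eventually (hzeq c₂)] with k h2 h3
      rw [h2, h3, div_mul_div_comm]
    -- Pg ratio tends to 1
    have hPgr : Tendsto (fun k => (Psub g).eval (z c₁ (T k)) / (Psub g).eval (z c₂ (T k)))
        atTop (𝓝 1) := by
      have h1 := (hzz.pow n).mul (hr2.inv₀ one_ne_zero)
      rw [one_pow, inv_one, mul_one] at h1
      have h2 := hr1.mul h1
      rw [mul_one] at h2
      apply h2.congr'
      filter_upwards [hne2, hzne1, hzne2] with k hk1 hk2 hk3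
      exact ratio_helper _ _ _ _ _ hbg0 hk2 hk3 hk1 n
    -- Y ratio tends to 1
    have hYr : Tendsto (fun k => (Yc c₁ (T k) / T k) ^ dg / (Yc c₂ (T k) / T k) ^ dg)
        atTop (𝓝 1) := by
      have h1 := (((hY c₁).comp hTs).pow dg).div (((hY c₂).comp hTs).pow dg)
        (pow_ne_zero _ hδ)
      rwa [div_self (pow_ne_zero _ hδ)] at h1
    -- final contradiction
    have hfin : (Psub f).eval c₁ = (Psub f).eval c₂ := by
      have hlim : Tendsto (fun k => (Psub f).eval c₂ *
          (((Yc c₁ (T k) / T k) ^ dg / (Yc c₂ (T k) / T k) ^ dg) *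
            ((Psub g).eval (z c₁ (T k)) / (Psub g).eval (z c₂ (T k)))))
          atTop (𝓝 ((Psub f).eval c₂)) := by
        have h1 := (hYr.mul hPgr).const_mul ((Psub f).eval c₂)
        rwa [mul_one, mul_one] at h1
      have heq : ∀ᶠ k in atTop, (Psub f).eval c₁ = (Psub f).eval c₂ *
          (((Yc c₁ (T k) / T k) ^ dg / (Yc c₂ (T k) / T k) ^ dg) *
            ((Psub g).eval (z c₁ (T k)) / (Psub g).eval (z c₂ (T k)))) := by
        filter_upwards [hTs.eventually (hE2 c₁), hTs.eventually (hE2 c₂),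
          hTs.eventually (hYne c₁), hTs.eventually (hYne c₂), hne2,
          hTs.eventually tpos] with k h1 h2 h3 h4 h5 h6
        have htne : T k ≠ 0 := ne_of_gt h6
        have hYt1 : Yc c₁ (T k) / T k ≠ 0 := div_ne_zero h3 htne
        have hYt2 : Yc c₂ (T k) / T k ≠ 0 := div_ne_zero h4 htne
        have hda : (T k) ^ df ≠ 0 := pow_ne_zero _ htne
        have hdb : (T k) ^ dg ≠ 0 := pow_ne_zero _ htne
        -- cross-multiplied identity
        have hcross : (T k ^ df * (Psub f).eval c₁) *
            (T k ^ dg * ((Yc c₂ (T k) / T k) ^ dg * (Psub g).eval (z c₂ (T k)))) =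
            (T k ^ df * (Psub f).eval c₂) *
            (T k ^ dg * ((Yc c₁ (T k) / T k) ^ dg * (Psub g).eval (z c₁ (T k)))) := by
          rw [h1, ← h2]
          ring
        have hc2 : (Psub f).eval c₁ *
            ((Yc c₂ (T k) / T k) ^ dg * (Psub g).eval (z c₂ (T k))) =
            (Psub f).eval c₂ *
            ((Yc c₁ (T k) / T k) ^ dg * (Psub g).eval (z c₁ (T k))) := by
          have h7 : (T k ^ df * T k ^ dg) * ((Psub f).eval c₁ *
              ((Yc c₂ (T k) / T k) ^ dg * (Psub g).eval (z c₂ (T k)))) =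
              (T k ^ df * T k ^ dg) * ((Psub f).eval c₂ *
              ((Yc c₁ (T k) / T k) ^ dg * (Psub g).eval (z c₁ (T k)))) := by
            calc (T k ^ df * T k ^ dg) * ((Psub f).eval c₁ *
                ((Yc c₂ (T k) / T k) ^ dg * (Psub g).eval (z c₂ (T k))))
                = (T k ^ df * (Psub f).eval c₁) *
                  (T k ^ dg * ((Yc c₂ (T k) / T k) ^ dg * (Psub g).eval (z c₂ (T k)))) := by
                  ring
              _ = (T k ^ df * (Psub f).eval c₂) *
                  (T k ^ dg * ((Yc c₁ (T k) / T k) ^ dg * (Psub g).eval (z c₁ (T k)))) :=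
                  hcross
              _ = (T k ^ df * T k ^ dg) * ((Psub f).eval c₂ *
                  ((Yc c₁ (T k) / T k) ^ dg * (Psub g).eval (z c₁ (T k)))) := by
                  ring
          exact mul_left_cancel₀ (mul_ne_zero hda hdb) h7
        have hY2ne : ((Yc c₂ (T k) / T k) ^ dg : ℝ) ≠ 0 := pow_ne_zero _ hYt2
        rw [div_mul_div_comm]
        exact cross_helper _ _ _ _ (mul_ne_zero hY2ne h5) hc2
      exact tendsto_nhds_unique tendsto_const_nhds (hlim.congr' (heq.mono fun k hk => hk.symm))
    exact hvne hfin


end Stmt13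


theorem stmt13 (q : ℕ) (hq : 2 ≤ q)
    (f g : MvPolynomial (Fin 2) ℝ) (hf0 : f ≠ 0) (hg0 : g ≠ 0) (df dg : ℕ)
    (hf : MvPolynomial.IsWeightedHomogeneous (fun i : Fin 2 => if i = 0 then q else 1) f df)
    (hg : MvPolynomial.IsWeightedHomogeneous (fun i : Fin 2 => if i = 0 then q else 1) g dg)
    (hfm : ¬ ∃ (A b : ℝ) (k l : ℕ), ∀ x y : ℝ,
      MvPolynomial.eval ![x, y] f = A * (x + b * y ^ q) ^ k * y ^ l)
    (hgm : ¬ ∃ (A b : ℝ) (k l : ℕ), ∀ x y : ℝ,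
      MvPolynomial.eval ![x, y] g = A * (x + b * y ^ q) ^ k * y ^ l)
    (σ : ℝ × ℝ → ℝ × ℝ) (hσ : IsC1DiffeoGerm σ)
    (hfg : ∀ᶠ p in 𝓝 (0 : ℝ × ℝ),
      MvPolynomial.eval ![p.1, p.2] f = MvPolynomial.eval ![(σ p).1, (σ p).2] g) :
    ∃ c₁ c₂ b : ℝ, c₁ ≠ 0 ∧ c₂ ≠ 0 ∧ ∀ x y : ℝ,
      MvPolynomial.eval ![x, y] f =
        MvPolynomial.eval ![c₁ * x - b * y ^ q, c₂ * y] g := by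

  obtain ⟨hσ0, U, V, τ, hU, hV, hU0, hV0, hmapσ, hmapτ, hτσ, hστ, hσC1, hτC1⟩ := hσ
  have hσCA : ContDiffAt ℝ 1 σ 0 := hσC1.contDiffAt (hU.mem_nhds hU0)
  have hL : HasStrictFDerivAt σ (fderiv ℝ σ 0) 0 := hσCA.hasStrictFDerivAt one_ne_zero
  set L := fderiv ℝ σ 0 with hLd
  have hτ0 : τ 0 = 0 := by
    have h1 := hτσ 0 hU0
    rwa [hσ0] at h1
  have hτCA : ContDiffAt ℝ 1 τ 0 := hτC1.contDiffAt (hV.mem_nhds hV0)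
  have hM : HasFDerivAt τ (fderiv ℝ τ 0) 0 :=
    (hτCA.differentiableAt one_ne_zero).hasFDerivAt
  have hcompderiv : HasFDerivAt (τ ∘ σ) ((fderiv ℝ τ 0).comp L) 0 := by
    have h1 : HasFDerivAt τ (fderiv ℝ τ 0) (σ 0) := by rw [hσ0]; exact hM
    exact h1.comp 0 hL.hasFDerivAt
  have hev : (τ ∘ σ) =ᶠ[𝓝 (0 : ℝ × ℝ)] id := by
    filter_upwards [hU.mem_nhds hU0] with x hx
    exact hτσ x hx
  have hid : HasFDerivAt (τ ∘ σ) (ContinuousLinearMap.id ℝ (ℝ × ℝ)) 0 :=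
    (hasFDerivAt_id (0 : ℝ × ℝ)).congr_of_eventuallyEq hev
  have hML : (fderiv ℝ τ 0).comp L = ContinuousLinearMap.id ℝ (ℝ × ℝ) :=
    hcompderiv.unique hid
  have hinj : Function.Injective ⇑L := by
    intro a b hab
    have h2 : ((fderiv ℝ τ 0).comp L) a = ((fderiv ℝ τ 0).comp L) b := by
      simp only [ContinuousLinearMap.comp_apply, hab]
    rw [hML] at h2
    simpa using h2
  have hE : ∀ c : ℝ, ∀ᶠ t in 𝓝[>] (0:ℝ), t ^ df * (Stmt13.Psub f).eval c
      = MvPolynomial.eval ![(σ (c * t ^ q, t)).1, (σ (c * t ^ q, t)).2] g := by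
    intro c
    have harc := Stmt13B.arc_tendsto hq c
    filter_upwards [harc.eventually hfg] with t ht
    rw [← ht]
    exact (Stmt13.A1 hf c t).symm
  have hβ0 := Stmt13.step1 hq f g hg0 df dg hf hg hfm σ L hL hσ0 hinj hE
  exact Stmt13.step2 hq f g hg0 df dg hf hg hfm σ L hL hσ0 hinj hE hβ0
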